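/- For the system x' = −x + (ε/2)y, y' = (1/ε)x − y with x(0)=1, y(0)=0 and ε > 0, the maximum over time of the total population x(t)+y(t) tends to infinity as ε → 0⁺. Concretely, y attains its maximum at t_max = (1/√2)(log(1+√2) − log(√2−1)) with y(t_max) = (√2/ε)(1+√2)^{−1/2−1/√2}(√2−1)^{1/√2−1/2}, and since x(t) > 0 for all t, max_t (x(t)+y(t)) > y(t_max) → ∞ as ε → 0⁺. -/

import Mathlib

/-- Explicit solution of the stable reactive two-patch system. -/
noncomputable def xSol (t : ℝ) : ℝ :=
  (1 / 2) * (Real.exp (-(1 - 1 / Real.sqrt 2) * t) + Real.exp (-(1 + 1 / Real.sqrt 2) * t))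

noncomputable def ySol (ε t : ℝ) : ℝ :=
  (1 / (Real.sqrt 2 * ε)) * (Real.exp (-(1 - 1 / Real.sqrt 2) * t) -
    Real.exp (-(1 + 1 / Real.sqrt 2) * t))

/-- The time at which `y` attains its maximum. -/
noncomputable def tMax : ℝ :=
  (1 / Real.sqrt 2) * (Real.log (1 + Real.sqrt 2) - Real.log (Real.sqrt 2 - 1))

/- ## Auxiliary machinery -/

lemma aux_one_lt_sqrt2 : 1 < Real.sqrt 2 := by
  nlinarith [Real.sq_sqrt (show (0:ℝ) ≤ 2 by norm_num), Real.sqrt_nonneg 2]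

/-- The value of `exp (-(t/√2))` at the maximizing time. -/
noncomputable def vStar : ℝ := ((Real.sqrt 2 - 1) / (Real.sqrt 2 + 1)) ^ (1/2 : ℝ)

lemma aux_expA (t : ℝ) : Real.exp (-(1 - 1 / Real.sqrt 2) * t)
    = (Real.exp (-(t / Real.sqrt 2))) ^ (Real.sqrt 2 - 1) := by
  rw [← Real.exp_mul]
  congr 1
  have h0 : Real.sqrt 2 ≠ 0 := by positivity
  field_simp

lemma aux_expB (t : ℝ) : Real.exp (-(1 + 1 / Real.sqrt 2) * t)
    = (Real.exp (-(t / Real.sqrt 2))) ^ (Real.sqrt 2 + 1) := by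
  rw [← Real.exp_mul]
  congr 1
  have h0 : Real.sqrt 2 ≠ 0 := by positivity
  field_simp

lemma aux_exp_tMax : Real.exp (-(tMax / Real.sqrt 2)) = vStar := by
  have hs1 : 1 < Real.sqrt 2 := aux_one_lt_sqrt2
  have hp : (0:ℝ) < Real.sqrt 2 - 1 := by linarith
  have hq : (0:ℝ) < Real.sqrt 2 + 1 := by linarith
  have hr : (0:ℝ) < (Real.sqrt 2 - 1) / (Real.sqrt 2 + 1) := div_pos hp hq
  rw [vStar, Real.rpow_def_of_pos hr, Real.log_div hp.ne' hq.ne']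
  congr 1
  rw [tMax]
  have h1 : (1 + Real.sqrt 2) = Real.sqrt 2 + 1 := by ring
  rw [h1]
  have hs0 : Real.sqrt 2 ≠ 0 := by positivity
  field_simp
  rw [Real.sq_sqrt (show (0:ℝ) ≤ 2 by norm_num)]
  ring

/-- weighted AM-GM implies the global maximality of `vStar`. -/
lemma aux_young (v : ℝ) (hv : 0 < v) :
    v ^ (Real.sqrt 2 - 1) - v ^ (Real.sqrt 2 + 1)
      ≤ vStar ^ (Real.sqrt 2 - 1) - vStar ^ (Real.sqrt 2 + 1) := by
  set s := Real.sqrt 2 with hs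
  have hs1 : 1 < s := aux_one_lt_sqrt2
  set p := s - 1 with hpdef
  set q := s + 1 with hqdef
  have hp : 0 < p := by simp [hpdef]; linarith
  have hq : 0 < q := by positivity
  set r := p / q with hrdef
  have hr : 0 < r := div_pos hp hq
  have hr1 : r < 1 := (div_lt_one hq).2 (by simp [hpdef, hqdef]; linarith)
  have hvs : 0 < vStar := Real.rpow_pos_of_pos (by rw [← hrdef] at *; exact hr) _
  have hvsr : vStar = r ^ (1/2 : ℝ) := rfl
  have h2 : vStar ^ (2:ℝ) = r := by
    rw [hvsr, ← Real.rpow_mul hr.le]; norm_num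
  have hpq : vStar ^ (p - q) = r⁻¹ := by
    rw [hvsr, ← Real.rpow_mul hr.le]
    have : (1/2 : ℝ) * (p - q) = -1 := by rw [hpdef, hqdef]; ring
    rw [this, Real.rpow_neg_one]
  have hvq : vStar ^ q = vStar ^ p * r := by
    rw [show q = p + 2 by simp [hpdef, hqdef]; ring, Real.rpow_add hvs, h2]
  have hA : (0:ℝ) ≤ v ^ q * vStar ^ (p - q) := by positivity
  have hB : (0:ℝ) ≤ vStar ^ p := by positivity
  have hw : p / q + 2 / q = 1 := by field_simp [hpdef, hqdef]; ring
  have hAM := Real.geom_mean_le_arith_mean2_weighted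
    (div_pos hp hq).le (by positivity) hA hB hw
  have hL : (v ^ q * vStar ^ (p - q)) ^ (p / q) * (vStar ^ p) ^ (2 / q) = v ^ p := by
    rw [Real.mul_rpow (by positivity) (by positivity),
        ← Real.rpow_mul hv.le, ← Real.rpow_mul hvs.le, ← Real.rpow_mul hvs.le,
        mul_assoc, ← Real.rpow_add hvs]
    have e1 : q * (p / q) = p := by field_simp
    have e2 : (p - q) * (p / q) + p * (2 / q) = 0 := by
      have hpq2 : p - q = -2 := by rw [hpdef, hqdef]; ring
      rw [hpq2]; ring
    rw [e1, e2, Real.rpow_zero, mul_one]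
  rw [hL] at hAM
  have hqne : q ≠ 0 := hq.ne'
  have hrw : p / q * (v ^ q * vStar ^ (p - q)) = v ^ q := by
    rw [hpq, hrdef]; field_simp
  rw [hrw] at hAM
  have hfin : 2 / q * vStar ^ p = vStar ^ p - vStar ^ q := by
    have hq2 : (2:ℝ) / q = 1 - r := by rw [hrdef, hpdef, hqdef]; field_simp; ring
    rw [hvq, hq2]; ring
  linarith [hAM, hfin.symm.le]

lemma aux_isMaxOn (ε : ℝ) (hε : 0 < ε) : IsMaxOn (ySol ε) Set.univ tMax := by
  intro t _
  have hs0 : (0:ℝ) < Real.sqrt 2 := by linarith [aux_one_lt_sqrt2]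
  have hc : (0:ℝ) ≤ 1 / (Real.sqrt 2 * ε) := by positivity
  have h := aux_young (Real.exp (-(t / Real.sqrt 2))) (Real.exp_pos _)
  simp only [ySol, Set.mem_setOf_eq]
  rw [aux_expA t, aux_expB t, aux_expA tMax, aux_expB tMax, aux_exp_tMax]
  exact mul_le_mul_of_nonneg_left h hc

lemma aux_yMaxVal (ε : ℝ) (hε : 0 < ε) : ySol ε tMax =
      (Real.sqrt 2 / ε) * (1 + Real.sqrt 2) ^ (-(1 / 2 : ℝ) - 1 / Real.sqrt 2) *
        (Real.sqrt 2 - 1) ^ ((1 / Real.sqrt 2 : ℝ) - 1 / 2) := by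
  have hs1 : 1 < Real.sqrt 2 := aux_one_lt_sqrt2
  have hs2 : Real.sqrt 2 ^ 2 = 2 := Real.sq_sqrt (by norm_num)
  set s := Real.sqrt 2 with hs
  have hp : (0:ℝ) < s - 1 := by linarith
  have hq : (0:ℝ) < s + 1 := by linarith
  have hs0 : (0:ℝ) < s := by linarith
  set r := (s - 1) / (s + 1) with hrdef
  have hr : 0 < r := div_pos hp hq
  have hvs : 0 < vStar := Real.rpow_pos_of_pos hr _
  set E := (1/2 : ℝ) * (s - 1) with hEdef
  have hvp : vStar ^ (s - 1) = (s - 1) ^ E / (s + 1) ^ E := by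
    rw [show vStar = r ^ (1/2:ℝ) from rfl, ← Real.rpow_mul hr.le, hrdef,
      Real.div_rpow hp.le hq.le]
  have h2 : vStar ^ (2:ℝ) = r := by
    rw [show vStar = r ^ (1/2:ℝ) from rfl, ← Real.rpow_mul hr.le]; norm_num
  have hvq : vStar ^ (s + 1) = vStar ^ (s - 1) * r := by
    rw [show s + 1 = (s - 1) + 2 by ring, Real.rpow_add hvs, h2]
  have he1 : (1 / s : ℝ) - 1 / 2 = E := by
    rw [hEdef]; field_simp; nlinarith [hs2]
  have he2 : (-(1 / 2 : ℝ) - 1 / s) = -(E + 1) := by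
    rw [hEdef]; field_simp; nlinarith [hs2]
  rw [ySol, aux_expA tMax, aux_expB tMax, aux_exp_tMax, hvq, hvp, he1, he2,
    show (1 + s) = s + 1 by ring, Real.rpow_neg hq.le, Real.rpow_add hq,
    Real.rpow_one]
  have hA : (0:ℝ) < (s - 1) ^ E := Real.rpow_pos_of_pos hp _
  have hB : (0:ℝ) < (s + 1) ^ E := Real.rpow_pos_of_pos hq _
  rw [hrdef]
  field_simp
  simp only [← hs]
  linear_combination (-1 : ℝ) * hs2

/-- For the system `x' = −x + (ε/2)y`, `y' = (1/ε)x − y`, `x(0)=1`, `y(0)=0`: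
`y` attains its maximum at `tMax`, with the stated explicit value, `x` is
positive, and the maximal total population exceeds `y(tMax)`, which tends to
infinity as `ε → 0⁺`; hence `maxₜ (x+y)` tends to infinity. -/
theorem stmt14 :
    (∀ ε : ℝ, 0 < ε → IsMaxOn (ySol ε) Set.univ tMax) ∧
    (∀ ε : ℝ, 0 < ε → ySol ε tMax =
      (Real.sqrt 2 / ε) * (1 + Real.sqrt 2) ^ (-(1 / 2 : ℝ) - 1 / Real.sqrt 2) *
        (Real.sqrt 2 - 1) ^ ((1 / Real.sqrt 2 : ℝ) - 1 / 2)) ∧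
    (∀ t : ℝ, 0 < xSol t) ∧
    (∀ ε : ℝ, 0 < ε → ySol ε tMax < xSol tMax + ySol ε tMax) ∧
    Filter.Tendsto (fun ε : ℝ => xSol tMax + ySol ε tMax)
      (nhdsWithin 0 (Set.Ioi 0)) Filter.atTop := by
  have hxpos : ∀ t : ℝ, 0 < xSol t := fun t => by rw [xSol]; positivity
  refine ⟨aux_isMaxOn, aux_yMaxVal, hxpos, fun ε hε => by linarith [hxpos tMax], ?_⟩
  have hs1 : 1 < Real.sqrt 2 := aux_one_lt_sqrt2
  set C : ℝ := Real.sqrt 2 * (1 + Real.sqrt 2) ^ (-(1 / 2 : ℝ) - 1 / Real.sqrt 2) *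
    (Real.sqrt 2 - 1) ^ ((1 / Real.sqrt 2 : ℝ) - 1 / 2) with hCdef
  have hC : 0 < C := by
    rw [hCdef]
    have h1 : (0:ℝ) < (1 + Real.sqrt 2) ^ (-(1 / 2 : ℝ) - 1 / Real.sqrt 2) :=
      Real.rpow_pos_of_pos (by linarith) _
    have h2 : (0:ℝ) < (Real.sqrt 2 - 1) ^ ((1 / Real.sqrt 2 : ℝ) - 1 / 2) :=
      Real.rpow_pos_of_pos (by linarith) _
    positivity
  have hbase : Filter.Tendsto (fun ε : ℝ => xSol tMax + C * ε⁻¹)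
      (nhdsWithin 0 (Set.Ioi 0)) Filter.atTop := by
    apply Filter.tendsto_atTop_add_const_left
    exact Filter.Tendsto.const_mul_atTop hC tendsto_inv_nhdsGT_zero
  refine hbase.congr' ?_
  filter_upwards [self_mem_nhdsWithin] with ε (hε : 0 < ε)
  rw [aux_yMaxVal ε hε, hCdef]
  field_simp
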